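/- Theorem (Zhu's generalized Jacobi-Stirling triangle of the second kind). Let a₁, a₂, a₃, b₁, b₂, b₃ be real numbers such that for every k ∈ ℕ one has a₁k² + a₂k + a₃ ≥ 0 and b₁k² + b₂k + b₃ ≥ 0. Define J : ℕ → ℕ → ℝ by J 0 0 = 1, J n k = 0 unless 0 ≤ k ≤ n, and for n ≥ 1 and 0 ≤ k ≤ n, J n k = (a₁k² + a₂k + a₃) · J (n−1) k + (b₁k² + b₂k + b₃) · J (n−1) (k−1), where the term with index k−1 is 0 when k = 0. Then the matrix [J n k]_{n,k≥0} is totally positive. -/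
import Mathlib


open Finset

/-- An `ℕ × ℕ` matrix of real numbers is *totally positive* if every minor
taken along strictly increasing row and column indices is nonnegative. -/
def TPReal (A : ℕ → ℕ → ℝ) : Prop :=
  ∀ r : ℕ, 1 ≤ r → ∀ ρ κ : Fin r → ℕ, StrictMono ρ → StrictMono κ →
    0 ≤ (Matrix.of fun i j : Fin r => A (ρ i) (κ j)).det

/-- The Toeplitz matrix of a sequence: `𝒯(c) i j = c (i - j)` for `i ≥ j`
and `0` otherwise. -/
def toeplitz (c : ℕ → ℝ) : ℕ → ℕ → ℝ :=
  fun i j => if j ≤ i then c (i - j) else 0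

/-- Zhu's generalized Jacobi-Stirling triangle of the second kind, with
row-independent weights `f k` and `g k`: `J 0 0 = 1`, `J n k = 0` unless
`0 ≤ k ≤ n`, and for `n ≥ 1` and `0 ≤ k ≤ n`,
`J n k = f k · J (n-1) k + g k · J (n-1) (k-1)`, where the `k-1` term
vanishes when `k = 0`. -/
noncomputable def zhuJ (f g : ℕ → ℝ) : ℕ → ℕ → ℝ
  | 0, 0 => 1
  | 0, _ + 1 => 0
  | n + 1, 0 => f 0 * zhuJ f g n 0
  | n + 1, k + 1 =>
      if k + 1 ≤ n + 1 then
        f (k + 1) * zhuJ f g n (k + 1) + g (k + 1) * zhuJ f g n k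
      else 0

/-! ### Auxiliary machinery for the proof -/

/-- Shift of a weight sequence. -/
def shf (f : ℕ → ℝ) : ℕ → ℝ := fun j => f (j + 1)

lemma zhuJ_zz (f g : ℕ → ℝ) : zhuJ f g 0 0 = 1 := by simp [zhuJ]

lemma zhuJ_zs (f g : ℕ → ℝ) (k : ℕ) : zhuJ f g 0 (k+1) = 0 := by simp [zhuJ]

lemma zhuJ_sz (f g : ℕ → ℝ) (n : ℕ) : zhuJ f g (n+1) 0 = f 0 * zhuJ f g n 0 := by
  simp [zhuJ]

lemma zhuJ_ss (f g : ℕ → ℝ) (n k : ℕ) (h : k ≤ n) :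
    zhuJ f g (n+1) (k+1) = f (k+1) * zhuJ f g n (k+1) + g (k+1) * zhuJ f g n k := by
  rw [zhuJ, if_pos (by omega)]

lemma zhuJ_vanish (f g : ℕ → ℝ) : ∀ n k, n < k → zhuJ f g n k = 0 := by
  intro n
  induction n with
  | zero =>
    intro k hk
    match k, hk with
    | k+1, _ => simp [zhuJ]
  | succ n ih =>
    intro k hk
    match k, hk with
    | k+1, hk => rw [zhuJ, if_neg (by omega)]

/-- The "first-step" recurrence for the triangle: peeling off the first step of
the underlying weighted paths instead of the last one. -/
lemma zhuJ_key (f g : ℕ → ℝ) : ∀ n k,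
    zhuJ f g (n+1) (k+1) = f 0 * zhuJ f g n (k+1) + g 1 * zhuJ (shf f) (shf g) n k := by
  intro n
  induction n with
  | zero =>
    intro k
    match k with
    | 0 => simp [zhuJ, shf]
    | k+1 =>
      rw [zhuJ_vanish f g 1 (k+2) (by omega), zhuJ_zs f g (k+1),
        zhuJ_zs (shf f) (shf g) k]
      ring
  | succ n ih =>
    intro k
    match k with
    | 0 =>
      conv_lhs => rw [zhuJ_ss f g (n+1) 0 (by omega), ih 0, zhuJ_sz f g n]
      conv_rhs => rw [zhuJ_ss f g n 0 (by omega), zhuJ_sz (shf f) (shf g) n]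
      simp only [shf]
      ring
    | k+1 =>
      by_cases h2 : k + 1 ≤ n
      · have hb1 : zhuJ f g (n+1) (k+2) =
            f (k+2) * zhuJ f g n (k+2) + g (k+2) * zhuJ f g n (k+1) :=
          zhuJ_ss f g n (k+1) h2
        rw [hb1, zhuJ_ss f g (n+1) (k+1) (by omega), ih (k+1), ih k,
          zhuJ_ss (shf f) (shf g) n k (by omega)]
        simp only [shf]
        ring
      · by_cases h3 : k + 1 ≤ n + 1
        · have hb1 : zhuJ f g (n+1) (k+2) = 0 := zhuJ_vanish f g (n+1) (k+2) (by omega)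
          rw [hb1, zhuJ_ss f g (n+1) (k+1) (by omega), ih (k+1), ih k,
            zhuJ_ss (shf f) (shf g) n k (by omega),
            zhuJ_vanish f g n (k+2) (by omega), zhuJ_vanish f g n (k+1) (by omega)]
          simp only [shf]
          ring
        · rw [zhuJ_vanish f g (n+2) (k+2) (by omega),
            zhuJ_vanish f g (n+1) (k+2) (by omega),
            zhuJ_vanish (shf f) (shf g) (n+1) (k+1) (by omega)]
          ring

/-- The "direct sum" factor: row `0` is `e₀`, and row `m+1` is `g 1` times
row `m` of the shifted triangle, pushed one column to the right. -/
noncomputable def dsum (f g : ℕ → ℝ) : ℕ → ℕ → ℝ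
  | 0, 0 => 1
  | 0, _+1 => 0
  | _+1, 0 => 0
  | m+1, k+1 => g 1 * zhuJ (shf f) (shf g) m k

/-- Factorization of the triangle: geometric lower-triangular Toeplitz factor
times the direct-sum factor. -/
lemma zhuJ_eq_sum (f g : ℕ → ℝ) : ∀ n k,
    zhuJ f g n k = ∑ m ∈ Finset.range (n+1), (f 0)^(n-m) * dsum f g m k := by
  intro n
  induction n with
  | zero =>
    intro k
    rw [Finset.sum_range_one]
    match k with
    | 0 => simp [zhuJ_zz, dsum]
    | k+1 => simp [zhuJ_zs, dsum]
  | succ n ih =>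
    intro k
    rw [Finset.sum_range_succ]
    have hc : ∀ m ∈ Finset.range (n+1), (f 0)^(n+1-m) * dsum f g m k
        = f 0 * ((f 0)^(n-m) * dsum f g m k) := by
      intro m hm
      rw [Finset.mem_range] at hm
      have h1 : n + 1 - m = (n - m) + 1 := by omega
      rw [h1, pow_succ]
      ring
    rw [Finset.sum_congr rfl hc, ← Finset.mul_sum, ← ih k, Nat.sub_self, pow_zero, one_mul]
    match k with
    | 0 => rw [zhuJ_sz]; simp [dsum]
    | k+1 => rw [zhuJ_key]; simp [dsum]

/-- Elementary row operation: add `t` times row `i` to row `i+1`. -/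
def rowAdd (t : ℝ) (i : ℕ) (Y : ℕ → ℕ → ℝ) : ℕ → ℕ → ℝ :=
  fun n k => if n = i + 1 then Y n k + t * Y i k else Y n k

/-- Iterated row operations realizing the geometric Toeplitz factor. -/
def iterRA (t : ℝ) (Y : ℕ → ℕ → ℝ) : ℕ → ℕ → ℕ → ℝ
  | 0 => Y
  | c+1 => rowAdd t c (iterRA t Y c)

lemma iterRA_spec (t : ℝ) (Y : ℕ → ℕ → ℝ) : ∀ c n j,
    iterRA t Y c n j
      = if n ≤ c then ∑ m ∈ Finset.range (n+1), t^(n-m) * Y m j else Y n j := by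
  intro c
  induction c with
  | zero =>
    intro n j
    match n with
    | 0 => simp [iterRA]
    | n+1 => simp [iterRA]
  | succ c ih =>
    intro n j
    show rowAdd t c (iterRA t Y c) n j = _
    rw [rowAdd]
    by_cases hn : n = c + 1
    · subst hn
      rw [if_pos rfl, if_pos (le_refl (c+1)), ih (c+1) j,
        if_neg (show ¬(c+1 ≤ c) by omega), ih c j, if_pos (le_refl c)]
      have hc : ∀ m ∈ Finset.range (c+1), t^(c+1-m) * Y m j
          = t * (t^(c-m) * Y m j) := by
        intro m hm
        rw [Finset.mem_range] at hm
        have h1 : c + 1 - m = (c - m) + 1 := by omega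
        rw [h1, pow_succ]
        ring
      rw [Finset.sum_range_succ (fun m => t^(c+1-m) * Y m j) (c+1),
        Nat.sub_self, pow_zero, one_mul, Finset.sum_congr rfl hc, ← Finset.mul_sum]
      ring
    · rw [if_neg hn, ih n j]
      by_cases h2 : n ≤ c
      · rw [if_pos h2, if_pos (show n ≤ c + 1 by omega)]
      · rw [if_neg h2, if_neg (show ¬(n ≤ c + 1) by omega)]

/-- Nonnegativity of all minors whose row indices are bounded by `B`. -/
def MinorsNonneg (B : ℕ) (Y : ℕ → ℕ → ℝ) : Prop :=
  ∀ r : ℕ, ∀ ρ κ : Fin r → ℕ, StrictMono ρ → StrictMono κ → (∀ i, ρ i ≤ B) →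
    0 ≤ (Matrix.of fun i j : Fin r => Y (ρ i) (κ j)).det

/-- Elementary row operations with nonnegative coefficient preserve
nonnegativity of minors (Whitney's argument). -/
lemma minors_rowAdd {t : ℝ} (ht : 0 ≤ t) (i B : ℕ) {Y : ℕ → ℕ → ℝ}
    (h : MinorsNonneg B Y) : MinorsNonneg B (rowAdd t i Y) := by
  intro r ρ κ hρ hκ hB
  by_cases hmem : ∃ a, ρ a = i + 1
  · obtain ⟨a0, ha0⟩ := hmem
    set M : Matrix (Fin r) (Fin r) ℝ := Matrix.of (fun a b => Y (ρ a) (κ b)) with hM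
    have hEq : (Matrix.of fun a b : Fin r => rowAdd t i Y (ρ a) (κ b))
        = M.updateRow a0 (M a0 + t • fun b => Y i (κ b)) := by
      ext a b
      by_cases hA : a = a0
      · subst hA
        rw [Matrix.updateRow_self]
        simp [rowAdd, ha0, hM]
      · have hne : ρ a ≠ i + 1 := fun hc => hA (hρ.injective (hc.trans ha0.symm))
        rw [Matrix.updateRow_ne hA]
        simp only [Matrix.of_apply, rowAdd, if_neg hne, hM]
    rw [hEq, Matrix.det_updateRow_add, Matrix.updateRow_eq_self,
      Matrix.det_updateRow_smul]
    have h2 : 0 ≤ (M.updateRow a0 fun b => Y i (κ b)).det := by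
      by_cases hmem2 : ∃ a, ρ a = i
      · obtain ⟨a1, ha1⟩ := hmem2
        have hne : a0 ≠ a1 := by
          intro hc
          rw [hc, ha1] at ha0
          omega
        have hrows : (M.updateRow a0 fun b => Y i (κ b)) a0
            = (M.updateRow a0 fun b => Y i (κ b)) a1 := by
          rw [Matrix.updateRow_self, Matrix.updateRow_ne (Ne.symm hne)]
          funext b
          simp [hM, ha1]
        exact le_of_eq (Matrix.det_zero_of_row_eq hne hrows).symm
      · push_neg at hmem2
        set ρ' : Fin r → ℕ := fun a => if a = a0 then i else ρ a with hρ'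
        have hmono : StrictMono ρ' := by
          intro a a' hlt
          simp only [hρ']
          by_cases h1 : a = a0 <;> by_cases h2 : a' = a0
          · subst h1; subst h2; exact absurd hlt (lt_irrefl _)
          · rw [if_pos h1, if_neg h2]
            subst h1
            have := hρ hlt
            have := hmem2 a'
            omega
          · rw [if_neg h1, if_pos h2]
            subst h2
            have := hρ hlt
            have := hmem2 a
            omega
          · rw [if_neg h1, if_neg h2]
            exact hρ hlt
        have hB' : ∀ a, ρ' a ≤ B := by
          intro a
          simp only [hρ']
          by_cases h1 : a = a0
          · rw [if_pos h1]
            have := hB a0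
            omega
          · rw [if_neg h1]; exact hB a
        have hEq2 : (M.updateRow a0 fun b => Y i (κ b))
            = Matrix.of fun a b => Y (ρ' a) (κ b) := by
          ext a b
          by_cases h1 : a = a0
          · subst h1
            rw [Matrix.updateRow_self]
            simp [hρ']
          · rw [Matrix.updateRow_ne h1]
            simp [hM, hρ', if_neg h1]
        rw [hEq2]
        exact h r ρ' κ hmono hκ hB'
    have h1 : 0 ≤ M.det := h r ρ κ hρ hκ hB
    exact add_nonneg h1 (mul_nonneg ht h2)
  · push_neg at hmem
    have hEq : (Matrix.of fun a b : Fin r => rowAdd t i Y (ρ a) (κ b))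
        = Matrix.of fun a b : Fin r => Y (ρ a) (κ b) := by
      ext a b
      simp only [Matrix.of_apply, rowAdd, if_neg (hmem a)]
    rw [hEq]
    exact h r ρ κ hρ hκ hB

lemma minors_dsum_aux (f g : ℕ → ℝ) (hg : ∀ k, 0 ≤ g k) (B : ℕ)
    (h : MinorsNonneg B (zhuJ (shf f) (shf g)))
    (r : ℕ) (ρ κ : Fin r → ℕ) (hρ : StrictMono ρ) (hκ : StrictMono κ)
    (hB : ∀ a, ρ a ≤ B + 1) (hρ1 : ∀ a, 1 ≤ ρ a) (hκ1 : ∀ b, 1 ≤ κ b) :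
    0 ≤ (Matrix.of fun a b : Fin r => dsum f g (ρ a) (κ b)).det := by
  have hDS : ∀ a b : Fin r, dsum f g (ρ a) (κ b)
      = g 1 * zhuJ (shf f) (shf g) (ρ a - 1) (κ b - 1) := by
    intro a b
    obtain ⟨m, hm⟩ : ∃ m, ρ a = m + 1 := ⟨ρ a - 1, by have := hρ1 a; omega⟩
    obtain ⟨k0, hk⟩ : ∃ k0, κ b = k0 + 1 := ⟨κ b - 1, by have := hκ1 b; omega⟩
    rw [hm, hk]
    simp [dsum]
  have hEq : (Matrix.of fun a b : Fin r => dsum f g (ρ a) (κ b))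
      = g 1 • Matrix.of fun a b : Fin r => zhuJ (shf f) (shf g) (ρ a - 1) (κ b - 1) := by
    ext a b
    simp [hDS a b]
  rw [hEq, Matrix.det_smul]
  apply mul_nonneg (pow_nonneg (hg 1) _)
  refine h r (fun a => ρ a - 1) (fun b => κ b - 1) ?_ ?_ ?_
  · intro a a' hlt
    show ρ a - 1 < ρ a' - 1
    have := hρ hlt
    have := hρ1 a
    omega
  · intro b b' hlt
    show κ b - 1 < κ b' - 1
    have := hκ hlt
    have := hκ1 b
    omega
  · intro a
    show ρ a - 1 ≤ B
    have := hB a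
    omega

lemma minors_dsum (f g : ℕ → ℝ) (hg : ∀ k, 0 ≤ g k) (B : ℕ)
    (h : MinorsNonneg B (zhuJ (shf f) (shf g))) :
    MinorsNonneg (B + 1) (dsum f g) := by
  intro r ρ κ hρ hκ hB
  match r with
  | 0 => simp [Matrix.det_isEmpty]
  | r + 1 =>
    by_cases hr0 : ρ 0 = 0
    · by_cases hk0 : κ 0 = 0
      · -- expand along the first row, which is `e₀`
        rw [Matrix.det_succ_row_zero]
        rw [Finset.sum_eq_single 0]
        · simp only [Fin.val_zero, pow_zero, one_mul, Matrix.of_apply, hr0, hk0]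
          rw [show dsum f g 0 0 = 1 from rfl, one_mul]
          have hsub : ((Matrix.of fun a b : Fin (r+1) => dsum f g (ρ a) (κ b)).submatrix
              Fin.succ (Fin.succAbove 0))
              = Matrix.of fun a b : Fin r => dsum f g (ρ a.succ) (κ b.succ) := by
            ext a b
            simp [Fin.zero_succAbove]
          rw [hsub]
          apply minors_dsum_aux f g hg B h r (fun a => ρ a.succ) (fun b => κ b.succ)
          · exact fun a a' hlt => hρ (Fin.succ_lt_succ_iff.mpr hlt)
          · exact fun b b' hlt => hκ (Fin.succ_lt_succ_iff.mpr hlt)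
          · exact fun a => hB a.succ
          · intro a
            have : ρ 0 < ρ a.succ := hρ (Fin.succ_pos a)
            omega
          · intro b
            have : κ 0 < κ b.succ := hκ (Fin.succ_pos b)
            omega
        · intro j _ hj
          have hkj : 1 ≤ κ j := by
            have : κ 0 < κ j := hκ (Fin.pos_iff_ne_zero.mpr hj)
            omega
          obtain ⟨k0, hk⟩ : ∃ k0, κ j = k0 + 1 := ⟨κ j - 1, by omega⟩
          simp only [Matrix.of_apply, hr0, hk]
          rw [show dsum f g 0 (k0+1) = 0 from rfl]
          ring
        · intro hmem
          exact absurd (Finset.mem_univ 0) hmem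
      · -- the first row of the minor vanishes
        refine le_of_eq (Matrix.det_eq_zero_of_row_eq_zero 0 fun j => ?_).symm
        have hkj : 1 ≤ κ j := by
          rcases eq_or_ne j 0 with rfl | hj
          · omega
          · have : κ 0 < κ j := hκ (Fin.pos_iff_ne_zero.mpr hj)
            omega
        obtain ⟨k0, hk⟩ : ∃ k0, κ j = k0 + 1 := ⟨κ j - 1, by omega⟩
        simp only [Matrix.of_apply, hr0, hk]
        exact rfl
    · have hρ1 : ∀ a, 1 ≤ ρ a := by
        intro a
        rcases eq_or_ne a 0 with rfl | ha
        · omega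
        · have : ρ 0 < ρ a := hρ (Fin.pos_iff_ne_zero.mpr ha)
          omega
      by_cases hk0 : κ 0 = 0
      · -- the first column of the minor vanishes
        refine le_of_eq (Matrix.det_eq_zero_of_column_eq_zero 0 fun a => ?_).symm
        obtain ⟨m, hm⟩ : ∃ m, ρ a = m + 1 := ⟨ρ a - 1, by have := hρ1 a; omega⟩
        simp only [Matrix.of_apply, hm, hk0]
        exact rfl
      · have hκ1 : ∀ b, 1 ≤ κ b := by
          intro b
          rcases eq_or_ne b 0 with rfl | hb
          · omega
          · have : κ 0 < κ b := hκ (Fin.pos_iff_ne_zero.mpr hb)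
            omega
        exact minors_dsum_aux f g hg B h (r+1) ρ κ hρ hκ hB hρ1 hκ1

/-- Main induction: all minors of the triangle with bounded row indices are
nonnegative, for arbitrary nonnegative weight sequences. -/
lemma zhuJ_minorsNonneg (B : ℕ) : ∀ f g : ℕ → ℝ,
    (∀ k, 0 ≤ f k) → (∀ k, 0 ≤ g k) → MinorsNonneg B (zhuJ f g) := by
  induction B with
  | zero =>
    intro f g hf hg r ρ κ hρ hκ hB
    match r with
    | 0 => simp [Matrix.det_isEmpty]
    | 1 =>
      rw [Matrix.det_fin_one]
      have h0 : ρ 0 = 0 := Nat.le_zero.mp (hB 0)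
      simp only [Matrix.of_apply, h0]
      match hk : κ 0 with
      | 0 => rw [zhuJ_zz]; norm_num
      | k+1 => rw [zhuJ_zs]
    | r+2 =>
      have h01 : ρ 0 < ρ 1 := hρ (by simp [Fin.lt_def])
      have := hB 0
      have := hB 1
      omega
  | succ B ih =>
    intro f g hf hg r ρ κ hρ hκ hB
    have hDS : MinorsNonneg (B+1) (dsum f g) :=
      minors_dsum f g hg B (ih (shf f) (shf g) (fun k => hf _) (fun k => hg _))
    have hIter : ∀ c, MinorsNonneg (B+1) (iterRA (f 0) (dsum f g) c) := by
      intro c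
      induction c with
      | zero => exact hDS
      | succ c ihc => exact minors_rowAdd (hf 0) c (B+1) ihc
    have hkey : (Matrix.of fun a b : Fin r => zhuJ f g (ρ a) (κ b))
        = Matrix.of fun a b : Fin r => iterRA (f 0) (dsum f g) (B+1) (ρ a) (κ b) := by
      ext a b
      simp only [Matrix.of_apply]
      rw [iterRA_spec, if_pos (hB a), ← zhuJ_eq_sum]
    rw [hkey]
    exact hIter (B+1) r ρ κ hρ hκ hB

/-- **Theorem (Zhu's generalized Jacobi-Stirling triangle of the second
kind).**  Let `a₁, a₂, a₃, b₁, b₂, b₃` be real numbers such that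
`a₁k² + a₂k + a₃ ≥ 0` and `b₁k² + b₂k + b₃ ≥ 0` for every `k ∈ ℕ`.  Then the
triangle `J` defined by `J 0 0 = 1`, `J n k = 0` unless `0 ≤ k ≤ n`, and
`J n k = (a₁k² + a₂k + a₃)·J (n-1) k + (b₁k² + b₂k + b₃)·J (n-1) (k-1)` is
totally positive. -/
theorem zhuJ_totallyPositive (a₁ a₂ a₃ b₁ b₂ b₃ : ℝ)
    (ha : ∀ k : ℕ, 0 ≤ a₁ * (k : ℝ) ^ 2 + a₂ * k + a₃)
    (hb : ∀ k : ℕ, 0 ≤ b₁ * (k : ℝ) ^ 2 + b₂ * k + b₃) :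
    TPReal (zhuJ (fun k => a₁ * (k : ℝ) ^ 2 + a₂ * k + a₃)
        (fun k => b₁ * (k : ℝ) ^ 2 + b₂ * k + b₃)) := by
  intro r hr ρ κ hρ hκ
  match r, hr with
  | r+1, _ =>
    exact zhuJ_minorsNonneg (ρ (Fin.last r)) _ _ ha hb (r+1) ρ κ hρ hκ
      (fun i => hρ.monotone (Fin.le_last i))
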